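/- If K is conditionally decomposable with respect to E₁, E₂, E_k and L = L₁ ∥ L₂ ∥ L_k with L_i ⊆ E_i* for i ∈ {1,2,k}, then K ∥ L is conditionally decomposable with respect to E₁, E₂, E_k, i.e., K ∥ L = P_{1+k}(K ∥ L) ∥ P_{2+k}(K ∥ L). -/
import Mathlib


open scoped Classical

/-- Natural projection: erase letters not in `A`. -/
noncomputable def proj {Ev : Type*} (A : Set Ev) (w : List Ev) : List Ev :=
  w.filter (fun a => decide (a ∈ A))

/-- Projection of a language. -/
noncomputable def projL {Ev : Type*} (A : Set Ev) (L : Set (List Ev)) : Set (List Ev) :=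
  proj A '' L

/-- Words over an alphabet `A`, i.e., `A*`. -/
def star {Ev : Type*} (A : Set Ev) : Set (List Ev) := {w | ∀ a ∈ w, a ∈ A}

/-- Synchronous product of `L₁ ⊆ A*` and `L₂ ⊆ B*`. -/
noncomputable def sync {Ev : Type*} (A B : Set Ev) (L1 L2 : Set (List Ev)) :
    Set (List Ev) :=
  {w | w ∈ star (A ∪ B) ∧ proj A w ∈ L1 ∧ proj B w ∈ L2}

/-- Prefix closure of a language. -/
def prefixCl {Ev : Type*} (L : Set (List Ev)) : Set (List Ev) := {w | ∃ v, w ++ v ∈ L}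

/-- Controllability of `K` with respect to (prefix-closed) `L` and uncontrollable events `Eu`. -/
def controllable {Ev : Type*} (K L : Set (List Ev)) (Eu : Set Ev) : Prop :=
  ∀ s ∈ prefixCl K, ∀ u ∈ Eu, s ++ [u] ∈ L → s ++ [u] ∈ prefixCl K

/-- Supremal controllable sublanguage of `K` w.r.t. `N` and `U`. -/
noncomputable def supC {Ev : Type*} (K N : Set (List Ev)) (U : Set Ev) : Set (List Ev) :=
  ⋃₀ {M | M ⊆ K ∧ controllable M N U}

/-- `proj A` is an `L`-observer. -/
def observer {Ev : Type*} (A : Set Ev) (L : Set (List Ev)) : Prop :=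
  ∀ t ∈ projL A L, ∀ s ∈ prefixCl L, proj A s <+: t →
    ∃ u, s ++ u ∈ L ∧ proj A (s ++ u) = t

/-- `proj A` is locally control consistent (LCC) for `L` (w.r.t. uncontrollable events `Eu`). -/
def lcc {Ev : Type*} (A Eu : Set Ev) (L : Set (List Ev)) : Prop :=
  ∀ s ∈ L, ∀ σ ∈ A ∩ Eu, proj A s ++ [σ] ∈ projL A L →
    (∃ u, (∀ a ∈ u, a ∉ A) ∧ s ++ u ++ [σ] ∈ L) →
    ∃ u, (∀ a ∈ u, a ∈ Eu ∧ a ∉ A) ∧ s ++ u ++ [σ] ∈ L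

lemma proj_eq_self {Ev : Type*} {A : Set Ev} {w : List Ev} (h : w ∈ star A) :
    proj A w = w := by
  unfold proj
  exact List.filter_eq_self.2 (fun a ha => by simpa using h a ha)

lemma proj_proj {Ev : Type*} {A B : Set Ev} (hBA : B ⊆ A) (w : List Ev) :
    proj B (proj A w) = proj B w := by
  unfold proj
  rw [List.filter_filter]
  apply List.filter_congr
  intro a _
  by_cases h : a ∈ B <;> simp [h, hBA, fun hb : a ∈ B => hBA hb]

lemma proj_mem_star {Ev : Type*} (A : Set Ev) (w : List Ev) : proj A w ∈ star A := by
  intro a ha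
  unfold proj at ha
  simpa using (List.of_mem_filter ha)

/-- if K is conditionally decomposable and L = L1 || L2 || Lk, then
K || L is conditionally decomposable. -/
theorem stmt13 {Ev : Type*} (E1 E2 Ek : Set Ev) (K L1 L2 Lk : Set (List Ev))
    (hK : K ⊆ star (E1 ∪ E2 ∪ Ek))
    (hL1 : L1 ⊆ star E1) (hL2 : L2 ⊆ star E2) (hLk : Lk ⊆ star Ek)
    (hcd : K = sync (E1 ∪ Ek) (E2 ∪ Ek) (projL (E1 ∪ Ek) K) (projL (E2 ∪ Ek) K)) :
    sync (E1 ∪ E2 ∪ Ek) (E1 ∪ E2 ∪ Ek) K (sync E1 (E2 ∪ Ek) L1 (sync E2 Ek L2 Lk)) =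
      sync (E1 ∪ Ek) (E2 ∪ Ek)
        (projL (E1 ∪ Ek)
          (sync (E1 ∪ E2 ∪ Ek) (E1 ∪ E2 ∪ Ek) K (sync E1 (E2 ∪ Ek) L1 (sync E2 Ek L2 Lk))))
        (projL (E2 ∪ Ek)
          (sync (E1 ∪ E2 ∪ Ek) (E1 ∪ E2 ∪ Ek) K (sync E1 (E2 ∪ Ek) L1 (sync E2 Ek L2 Lk)))) := by
  set E : Set Ev := E1 ∪ E2 ∪ Ek with hE
  set Lp : Set (List Ev) := sync E1 (E2 ∪ Ek) L1 (sync E2 Ek L2 Lk) with hLp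
  set S : Set (List Ev) := sync E E K Lp with hS
  have hEeq : (E1 ∪ Ek) ∪ (E2 ∪ Ek) = E := by
    ext a; simp [hE, Set.mem_union]; tauto
  have hstarE : ∀ w : List Ev, w ∈ star ((E1 ∪ Ek) ∪ (E2 ∪ Ek)) ↔ w ∈ star E := by
    intro w; rw [hEeq]
  -- membership characterization of S
  have hSmem : ∀ w : List Ev, w ∈ S ↔ w ∈ star E ∧ w ∈ K ∧ w ∈ Lp := by
    intro w
    simp only [hS, sync, Set.mem_setOf_eq, Set.union_self]
    constructor
    · rintro ⟨hw, hk, hl⟩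
      rw [proj_eq_self hw] at hk hl
      exact ⟨hw, hk, hl⟩
    · rintro ⟨hw, hk, hl⟩
      exact ⟨hw, by rw [proj_eq_self hw]; exact hk, by rw [proj_eq_self hw]; exact hl⟩
  ext w
  constructor
  · intro hw
    have hwS : w ∈ S := hw
    have hwstar : w ∈ star E := ((hSmem w).1 hwS).1
    refine ⟨(hstarE w).2 hwstar, ⟨w, hwS, rfl⟩, ⟨w, hwS, rfl⟩⟩
  · rintro ⟨hwstar, ⟨s, hsS, hs⟩, ⟨t, htS, ht⟩⟩
    have hwE : w ∈ star E := (hstarE w).1 hwstar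
    obtain ⟨hsE, hsK, hsL⟩ := (hSmem s).1 hsS
    obtain ⟨htE, htK, htL⟩ := (hSmem t).1 htS
    -- w ∈ K via hcd
    have hwK : w ∈ K := by
      rw [hcd]
      refine ⟨hwstar, ⟨s, hsK, hs⟩, ⟨t, htK, ht⟩⟩
    -- projections of w agree with those of s, t on subalphabets
    have h1 : proj E1 w = proj E1 s := by
      rw [← proj_proj (A := E1 ∪ Ek) Set.subset_union_left w, ← hs,
        proj_proj Set.subset_union_left]
    have h2 : proj E2 w = proj E2 t := by
      rw [← proj_proj (A := E2 ∪ Ek) Set.subset_union_left w, ← ht,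
        proj_proj Set.subset_union_left]
    have hk : proj Ek w = proj Ek t := by
      rw [← proj_proj (A := E2 ∪ Ek) Set.subset_union_right w, ← ht,
        proj_proj Set.subset_union_right]
    -- w ∈ Lp
    obtain ⟨_, hsL1, _⟩ := hsL
    obtain ⟨_, htL1, htL2⟩ := htL
    obtain ⟨_, htL2a, htL2b⟩ := htL2
    have hwLp : w ∈ Lp := by
      refine ⟨?_, by rw [h1]; exact hsL1, ?_⟩
      · intro a ha
        have := hwE a ha
        simp only [hE, Set.mem_union] at this ⊢
        tauto
      · refine ⟨proj_mem_star _ _, ?_, ?_⟩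
        · rw [proj_proj Set.subset_union_left, h2,
            ← proj_proj (A := E2 ∪ Ek) Set.subset_union_left t]
          exact htL2a
        · rw [proj_proj Set.subset_union_right, hk,
            ← proj_proj (A := E2 ∪ Ek) Set.subset_union_right t]
          exact htL2b
    exact (hSmem w).2 ⟨hwE, hwK, hwLp⟩
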